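/- Let Ω, Θ be nonempty closed convex sets in R^n with Ω \ Θ ≠ ∅, and f(x) = d(x; Ω) − d(x; Θ). Denote by S_1 the set of global minimizers of f over R^n and by S_2 the set of maximizers of d(·; Θ) over Ω. Then S_1 = { ū + t(ū − P(ū; Θ)) : ū ∈ S_2, t ≥ 0 }. -/
import Mathlib

open Classical in
noncomputable def proj (n : ℕ) (Q : Set (EuclideanSpace ℝ (Fin n)))
    (x : EuclideanSpace ℝ (Fin n)) : EuclideanSpace ℝ (Fin n) :=
  if h : ∃ p ∈ Q, dist x p = Metric.infDist x Q then h.choose else x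

lemma proj_spec (n : ℕ) (Q : Set (EuclideanSpace ℝ (Fin n)))
    (hQ : Q.Nonempty) (hQc : IsClosed Q) (x : EuclideanSpace ℝ (Fin n)) :
    proj n Q x ∈ Q ∧ dist x (proj n Q x) = Metric.infDist x Q := by
  obtain ⟨y, hy, hyd⟩ := hQc.exists_infDist_eq_dist hQ x
  have h : ∃ p ∈ Q, dist x p = Metric.infDist x Q := ⟨y, hy, hyd.symm⟩
  have : proj n Q x = h.choose := by
    simp only [proj, dif_pos h]
  rw [this]
  exact ⟨h.choose_spec.1, h.choose_spec.2⟩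


theorem solution_set_representation (n : ℕ)
    (Ω Θ : Set (EuclideanSpace ℝ (Fin n)))
    (hΩ : Ω.Nonempty) (hΩc : IsClosed Ω) (hΩconv : Convex ℝ Ω)
    (hΘ : Θ.Nonempty) (hΘc : IsClosed Θ) (hΘconv : Convex ℝ Θ)
    (hdiff : (Ω \ Θ).Nonempty)
    (f : EuclideanSpace ℝ (Fin n) → ℝ)
    (hf : ∀ x, f x = Metric.infDist x Ω - Metric.infDist x Θ) :
    {x | ∀ y, f x ≤ f y} =
      {x | ∃ ub, (ub ∈ Ω ∧ ∀ u ∈ Ω, Metric.infDist u Θ ≤ Metric.infDist ub Θ) ∧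
        ∃ t : ℝ, 0 ≤ t ∧ x = ub + t • (ub - proj n Θ ub)} := by
  -- generic lower bound lemma: b ≤ infDist
  have le_inf : ∀ (x : EuclideanSpace ℝ (Fin n)) (b : ℝ),
      (∀ θ ∈ Θ, b ≤ dist x θ) → b ≤ Metric.infDist x Θ := by
    intro x b hb
    by_contra h
    push_neg at h
    obtain ⟨θ, hθ, hd⟩ := (Metric.infDist_lt_iff hΘ).mp h
    exact absurd (hb θ hθ) (not_le.mpr hd)
  -- key lower bound: f y ≥ -infDist q Θ for q a nearest point of y in Ω
  have lb : ∀ (y q : EuclideanSpace ℝ (Fin n)), q ∈ Ω →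
      Metric.infDist y Ω = dist y q →
      -(Metric.infDist q Θ) ≤ f y := by
    intro y q hq hdq
    have := Metric.infDist_le_infDist_add_dist (x := y) (y := q) (s := Θ)
    rw [hf y, hdq]
    linarith [this]
  ext x
  simp only [Set.mem_setOf_eq]
  constructor
  · -- minimizer ⇒ representation
    intro hx
    obtain ⟨q, hqΩ, hqd⟩ := hΩc.exists_infDist_eq_dist hΩ x
    obtain ⟨hpΘ, hpd⟩ := proj_spec n Θ hΘ hΘc q
    set p := proj n Θ q with hp
    -- f x ≤ -infDist u Θ for all u ∈ Ω
    have hfu : ∀ u ∈ Ω, f x ≤ -(Metric.infDist u Θ) := by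
      intro u hu
      have := hx u
      rw [hf u, Metric.infDist_zero_of_mem hu] at this
      linarith
    have h1 : f x ≤ -(Metric.infDist q Θ) := hfu q hqΩ
    have h2 : -(Metric.infDist q Θ) ≤ f x := lb x q hqΩ hqd
    have heq : f x = -(Metric.infDist q Θ) := le_antisymm h1 h2
    have hmax : ∀ u ∈ Ω, Metric.infDist u Θ ≤ Metric.infDist q Θ := by
      intro u hu
      have := hfu u hu
      linarith [lb x q hqΩ hqd]
    -- infDist x Θ = dist x q + dist q p
    have hxΘ : Metric.infDist x Θ = dist x q + dist q p := by
      have hle : Metric.infDist x Θ ≤ dist x p :=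
        Metric.infDist_le_dist_of_mem hpΘ
      have htri : dist x p ≤ dist x q + dist q p := dist_triangle x q p
      have : Metric.infDist x Θ = Metric.infDist x Ω + Metric.infDist q Θ := by
        rw [hf x] at heq; linarith
      rw [hqd, ← hpd] at this
      linarith [hle.trans htri, this.le, this.ge]
    have hdxp : dist x q + dist q p = dist x p := by
      have hle : Metric.infDist x Θ ≤ dist x p :=
        Metric.infDist_le_dist_of_mem hpΘ
      have htri : dist x p ≤ dist x q + dist q p := dist_triangle x q p
      linarith [hxΘ ▸ hle]
    -- q ≠ p since infDist q Θ > 0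
    have hqΘpos : 0 < Metric.infDist q Θ := by
      obtain ⟨w, hwΩ, hwΘ⟩ := hdiff
      have : 0 < Metric.infDist w Θ := (hΘc.notMem_iff_infDist_pos hΘ).mp hwΘ
      linarith [hmax w hwΩ]
    have hqp : dist q p ≠ 0 := by rw [hpd]; exact ne_of_gt hqΘpos
    -- betweenness
    have hw : Wbtw ℝ x q p := dist_add_dist_eq_iff.mp hdxp
    obtain ⟨r, ⟨hr0, hr1⟩, hrq⟩ := hw
    have hrq' : x + r • (p - x) = q := by
      have := hrq
      simpa [AffineMap.lineMap_apply, vsub_eq_sub, vadd_eq_add, add_comm] using this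
    have hrne1 : r ≠ 1 := by
      intro h
      apply hqp
      rw [h, one_smul] at hrq'
      have : q = p := by rw [← hrq']; abel
      simp [this]
    have hr1' : 0 < 1 - r := lt_of_le_of_ne (by linarith) (by intro h; exact hrne1 (by linarith))
    refine ⟨q, ⟨hqΩ, hmax⟩, r / (1 - r), div_nonneg hr0 hr1'.le, ?_⟩
    rw [← hp]
    have hqmp : q - p = (1 - r) • (x - p) := by
      rw [← hrq']; module
    rw [hqmp, smul_smul, div_mul_cancel₀ _ (ne_of_gt hr1'), ← hrq']
    module
  · -- representation ⇒ minimizer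
    rintro ⟨ub, ⟨hubΩ, hubmax⟩, t, ht, hxeq⟩
    obtain ⟨hpΘ, hpd⟩ := proj_spec n Θ hΘ hΘc ub
    set p := proj n Θ ub with hp
    obtain ⟨w0, hw0⟩ := hΘ
    have hMnn : (0:ℝ) ≤ Metric.infDist ub Θ := Metric.infDist_nonneg
    intro y
    -- f y ≥ -M
    obtain ⟨qy, hqyΩ, hqyd⟩ := hΩc.exists_infDist_eq_dist hΩ y
    have hlby : -(Metric.infDist ub Θ) ≤ f y := le_trans (by simpa using neg_le_neg (hubmax qy hqyΩ)) (lb y qy hqyΩ hqyd)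
    -- f x ≤ -M
    have hdxub : dist x ub = t * Metric.infDist ub Θ := by
      rw [hxeq]
      rw [dist_eq_norm]
      have h0 : ub + t • (ub - p) - ub = t • (ub - p) := by abel
      rw [h0, norm_smul, Real.norm_eq_abs, abs_of_nonneg ht, ← dist_eq_norm, hpd]
    have hdxΩ : Metric.infDist x Ω ≤ t * Metric.infDist ub Θ := by
      rw [← hdxub]; exact Metric.infDist_le_dist_of_mem hubΩ
    -- infDist x Θ ≥ (1+t) M via convexity
    have hdxΘ : (1 + t) * Metric.infDist ub Θ ≤ Metric.infDist x Θ := by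
      apply le_inf
      intro θ hθ
      have h1t : (0:ℝ) < 1 + t := by linarith
      have hcomb : (1 / (1+t)) • θ + (t / (1+t)) • p ∈ Θ := by
        apply hΘconv hθ hpΘ (by positivity) (by positivity)
        field_simp
      have hkey : dist ub ((1 / (1+t)) • θ + (t / (1+t)) • p) = (1/(1+t)) * dist x θ := by
        rw [dist_eq_norm, dist_eq_norm]
        have : ub - ((1 / (1+t)) • θ + (t / (1+t)) • p)
            = (1/(1+t)) • (x - θ) := by
          rw [hxeq]
          have h1 : (1:ℝ)/(1+t) * (1+t) = 1 := by field_simp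
          have h2 : t/(1+t) * (1+t) = t := by field_simp
          match_scalars <;> field_simp <;> ring
        rw [this, norm_smul, Real.norm_eq_abs, abs_of_pos (by positivity)]
      have hMle : Metric.infDist ub Θ ≤ (1/(1+t)) * dist x θ := by
        rw [← hkey]; exact Metric.infDist_le_dist_of_mem hcomb
      calc (1 + t) * Metric.infDist ub Θ ≤ (1+t) * ((1/(1+t)) * dist x θ) := by nlinarith
        _ = dist x θ := by field_simp
    have hfx : f x ≤ -(Metric.infDist ub Θ) := by
      rw [hf x]
      nlinarith [hdxΩ, hdxΘ]
    linarith
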